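/- (Kernel-distance bound on the empirical IPM for hinge loss.) Define φ : ℝ^d × ℝ → ℝ^{d+1} by φ(u, y) = (y·u, 1). Let {(ψ_i, y_i)}_{i=1}^{m} and {(ψ'_i, y'_i)}_{i=1}^{n} be two finite samples in ℝ^d × ℝ with nonnegative weights a_i and b_i respectively, such that all points satisfy ‖ψ‖₂ ≤ 1 and y ∈ [−1, 1]. Then for every w ∈ ℝ^d with ‖w‖₂ ≤ 1, |∑_{i=1}^{m} a_i·max(1 − y_i⟨ψ_i, w⟩, 0) − ∑_{i=1}^{n} b_i·max(1 − y'_i⟨ψ'_i, w⟩, 0)| ≤ √2·‖∑_{i=1}^{m} a_i φ(ψ_i, y_i) − ∑_{i=1}^{n} b_i φ(ψ'_i, y'_i)‖₂. -/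

import Mathlib

open scoped InnerProductSpace

/-- The feature map `φ(u, y) = (y·u, 1)` taking values in the Euclidean space
`ℝ^d × ℝ ≅ ℝ^{d+1}` (indexed by `Fin d ⊕ Unit`). -/
noncomputable def phiHinge {d : ℕ} (u : EuclideanSpace ℝ (Fin d)) (y : ℝ) :
    EuclideanSpace ℝ (Fin d ⊕ Unit) :=
  (WithLp.equiv 2 _).symm (Sum.elim (fun i => y * u i) fun _ => (1 : ℝ))

/-- Kernel-distance bound on the empirical IPM for hinge loss: the weighted difference of
hinge losses of a norm-bounded linear model on two weighted samples in the constrained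
domain (`‖ψ‖₂ ≤ 1`, `y ∈ [−1,1]`) is bounded by `√2` times the empirical kernel distance
(MMD) between the samples for the kernel induced by `φ`. -/
theorem hinge_loss_ipm_le_kernel_distance {d : ℕ} (m n : ℕ)
    (a : Fin m → ℝ) (ψ : Fin m → EuclideanSpace ℝ (Fin d)) (y : Fin m → ℝ)
    (b : Fin n → ℝ) (ψ' : Fin n → EuclideanSpace ℝ (Fin d)) (y' : Fin n → ℝ)
    (ha : ∀ i, 0 ≤ a i) (hb : ∀ i, 0 ≤ b i)
    (hψ : ∀ i, ‖ψ i‖ ≤ 1) (hψ' : ∀ i, ‖ψ' i‖ ≤ 1)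
    (hy : ∀ i, y i ∈ Set.Icc (-1 : ℝ) 1) (hy' : ∀ i, y' i ∈ Set.Icc (-1 : ℝ) 1)
    (w : EuclideanSpace ℝ (Fin d)) (hw : ‖w‖ ≤ 1) :
    |(∑ i, a i * max (1 - y i * ⟪ψ i, w⟫_ℝ) 0) -
        ∑ i, b i * max (1 - y' i * ⟪ψ' i, w⟫_ℝ) 0| ≤
      Real.sqrt 2 * ‖(∑ i, a i • phiHinge (ψ i) (y i)) - ∑ i, b i • phiHinge (ψ' i) (y' i)‖ := by
  set v : EuclideanSpace ℝ (Fin d ⊕ Unit) :=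
    (WithLp.equiv 2 _).symm (Sum.elim (fun i => -w i) fun _ => (1 : ℝ)) with hv_def
  -- key inner product identity
  have hinner : ∀ (u : EuclideanSpace ℝ (Fin d)) (t : ℝ),
      ⟪phiHinge u t, v⟫_ℝ = 1 - t * ⟪u, w⟫_ℝ := by
    intro u t
    simp only [phiHinge, hv_def, PiLp.inner_apply, RCLike.inner_apply, conj_trivial,
      WithLp.equiv_symm_apply, PiLp.toLp_apply, Sum.elim_inl, Sum.elim_inr, Fintype.sum_sum_type]
    simp [Finset.mul_sum]
    ring_nf
    exact congrArg _ (Finset.sum_congr rfl fun x _ => by ring)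
  -- norm of v
  have hvnorm : ‖v‖ ≤ Real.sqrt 2 := by
    have hvv : ⟪v, v⟫_ℝ = ⟪w, w⟫_ℝ + 1 := by
      simp only [hv_def, PiLp.inner_apply, RCLike.inner_apply, conj_trivial,
        WithLp.equiv_symm_apply, PiLp.toLp_apply, Sum.elim_inl, Sum.elim_inr, Fintype.sum_sum_type]
      simp [mul_comm]
    have h1 : ‖v‖ ^ 2 = ‖w‖ ^ 2 + 1 := by
      rw [← real_inner_self_eq_norm_sq, ← real_inner_self_eq_norm_sq, hvv]
    have h2 : ‖v‖ ^ 2 ≤ 2 := by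
      have : ‖w‖ ^ 2 ≤ 1 := by
        calc ‖w‖ ^ 2 ≤ 1 ^ 2 := by
              exact pow_le_pow_left₀ (norm_nonneg w) hw 2
          _ = 1 := one_pow 2
      linarith [h1]
    have := Real.sqrt_le_sqrt h2
    rwa [Real.sqrt_sq (norm_nonneg v)] at this
  -- hinge losses are nonnegative-affine in this regime
  have hmax : ∀ (u : EuclideanSpace ℝ (Fin d)) (t : ℝ), ‖u‖ ≤ 1 → t ∈ Set.Icc (-1 : ℝ) 1 →
      max (1 - t * ⟪u, w⟫_ℝ) 0 = 1 - t * ⟪u, w⟫_ℝ := by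
    intro u t hu ht
    apply max_eq_left
    have h1 : |⟪u, w⟫_ℝ| ≤ 1 := by
      calc |⟪u, w⟫_ℝ| ≤ ‖u‖ * ‖w‖ := abs_real_inner_le_norm u w
        _ ≤ 1 * 1 := mul_le_mul hu hw (norm_nonneg w) zero_le_one
        _ = 1 := one_mul 1
    have h2 : |t * ⟪u, w⟫_ℝ| ≤ 1 := by
      rw [abs_mul]
      calc |t| * |⟪u, w⟫_ℝ| ≤ 1 * 1 :=
            mul_le_mul (abs_le.mpr ⟨ht.1, ht.2⟩) h1 (abs_nonneg _) zero_le_one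
        _ = 1 := one_mul 1
    have := (abs_le.mp h2).2
    linarith
  -- rewrite the LHS as an inner product
  have hsum : (∑ i, a i * max (1 - y i * ⟪ψ i, w⟫_ℝ) 0) -
      ∑ i, b i * max (1 - y' i * ⟪ψ' i, w⟫_ℝ) 0 =
      ⟪(∑ i, a i • phiHinge (ψ i) (y i)) - ∑ i, b i • phiHinge (ψ' i) (y' i), v⟫_ℝ := by
    rw [inner_sub_left, sum_inner, sum_inner]
    have e1 : ∀ i : Fin m, ⟪a i • phiHinge (ψ i) (y i), v⟫_ℝ =
        a i * max (1 - y i * ⟪ψ i, w⟫_ℝ) 0 := fun i => by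
      rw [real_inner_smul_left, hinner, hmax _ _ (hψ i) (hy i)]
    have e2 : ∀ i : Fin n, ⟪b i • phiHinge (ψ' i) (y' i), v⟫_ℝ =
        b i * max (1 - y' i * ⟪ψ' i, w⟫_ℝ) 0 := fun i => by
      rw [real_inner_smul_left, hinner, hmax _ _ (hψ' i) (hy' i)]
    rw [Finset.sum_congr rfl fun i _ => e1 i, Finset.sum_congr rfl fun i _ => e2 i]
  rw [hsum]
  calc |⟪(∑ i, a i • phiHinge (ψ i) (y i)) - ∑ i, b i • phiHinge (ψ' i) (y' i), v⟫_ℝ|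
      ≤ ‖(∑ i, a i • phiHinge (ψ i) (y i)) - ∑ i, b i • phiHinge (ψ' i) (y' i)‖ * ‖v‖ :=
        abs_real_inner_le_norm _ _
    _ ≤ ‖(∑ i, a i • phiHinge (ψ i) (y i)) - ∑ i, b i • phiHinge (ψ' i) (y' i)‖ * Real.sqrt 2 :=
        mul_le_mul_of_nonneg_left hvnorm (norm_nonneg _)
    _ = _ := mul_comm _ _
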